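/- arXiv:1407.1464 — 3 statements merged into one kernel-verified Lean document; each statement's English description precedes it below -/
import Mathlib

section
/- Let ρ > 0, c > 0 and u, v, w ∈ ℝ, and set U = (u, v, w, p). Then the matrices A₁(U), A₂(U), A₃(U) are symmetric, and if in addition u > c then A₁(U) is positive definite; hence the steady Euler system A₁(U)∂ₓU + A₂(U)∂ᵧU + A₃(U)∂_zU = 0 is symmetric hyperbolic with x regarded as the time-like direction. -/
open Matrix

/-- The matrix `A₁(U)` of the steady isentropic Euler system. -/
noncomputable def A1 (ρ c u : ℝ) : Matrix (Fin 4) (Fin 4) ℝ :=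
  !![ρ * u, 0, 0, 1;
     0, ρ * u, 0, 0;
     0, 0, ρ * u, 0;
     1, 0, 0, u / (ρ * c ^ 2)]

/-- The matrix `A₂(U)` of the steady isentropic Euler system. -/
noncomputable def A2 (ρ c v : ℝ) : Matrix (Fin 4) (Fin 4) ℝ :=
  !![ρ * v, 0, 0, 0;
     0, ρ * v, 0, 1;
     0, 0, ρ * v, 0;
     0, 1, 0, v / (ρ * c ^ 2)]

/-- The matrix `A₃(U)` of the steady isentropic Euler system. -/
noncomputable def A3 (ρ c w : ℝ) : Matrix (Fin 4) (Fin 4) ℝ :=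
  !![ρ * w, 0, 0, 0;
     0, ρ * w, 0, 0;
     0, 0, ρ * w, 1;
     0, 0, 1, w / (ρ * c ^ 2)]

/-- The matrices `A₁(U)`, `A₂(U)`, `A₃(U)` are symmetric, and if moreover `u > c`
then `A₁(U)` is positive definite, i.e. the steady Euler system is symmetric
hyperbolic with `x` as time-like direction. -/
theorem stmt0 (ρ c u v w p : ℝ) (hρ : 0 < ρ) (hc : 0 < c) :
    (A1 ρ c u).IsSymm ∧ (A2 ρ c v).IsSymm ∧ (A3 ρ c w).IsSymm ∧
      (c < u → (A1 ρ c u).PosDef) := by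
  refine ⟨?_, ?_, ?_, fun hu => ?_⟩
  · ext i j; fin_cases i <;> fin_cases j <;> simp [A1, Matrix.vecHead, Matrix.vecTail]
  · ext i j; fin_cases i <;> fin_cases j <;> simp [A2, Matrix.vecHead, Matrix.vecTail]
  · ext i j; fin_cases i <;> fin_cases j <;> simp [A3, Matrix.vecHead, Matrix.vecTail]
  · have hu0 : 0 < u := hc.trans hu
    refine Matrix.PosDef.of_dotProduct_mulVec_pos ?_ ?_
    · ext i j; fin_cases i <;> fin_cases j <;> simp [A1, Matrix.vecHead, Matrix.vecTail]
    · intro x hx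
      have hx' : 0 < x 0 ^ 2 + x 1 ^ 2 + x 2 ^ 2 + x 3 ^ 2 := by
        rcases (Function.ne_iff.mp hx) with ⟨i, hi⟩
        fin_cases i <;> simp_all <;> positivity
      simp only [A1, dotProduct, mulVec, Fin.sum_univ_four, RCLike.star_def, starRingEnd_apply,
        star_trivial]
      norm_num [Matrix.cons_val_succ, Matrix.vecHead, Matrix.vecTail, Matrix.cons_val_two, Matrix.cons_val_three]
      set t : ℝ := u / (ρ * c ^ 2) with ht
      have hpt : 1 < ρ * u * t := by
        rw [ht]
        have h2 : ρ * u * (u / (ρ * c ^ 2)) = u ^ 2 / c ^ 2 := by field_simp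
        rw [h2, lt_div_iff₀ (by positivity), one_mul]
        nlinarith
      have hP : 0 < ρ * u := mul_pos hρ hu0
      rcases eq_or_ne (x 3) 0 with h3 | h3
      · rw [h3]
        have h012 : 0 < x 0 ^ 2 + x 1 ^ 2 + x 2 ^ 2 := by nlinarith [sq_nonneg (x 3)]
        nlinarith [sq_nonneg (x 0), sq_nonneg (x 1), sq_nonneg (x 2)]
      · have h3sq : 0 < x 3 ^ 2 := by positivity
        have key : 0 < (ρ * u) * (x 0 * (ρ * u * x 0 + x 3) + x 1 * (ρ * u * x 1)
            + x 2 * (ρ * u * x 2) + x 3 * (x 0 + t * x 3)) := by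
          nlinarith [sq_nonneg (ρ * u * x 0 + x 3), mul_nonneg (mul_nonneg hP.le hP.le) (sq_nonneg (x 1)),
          mul_nonneg (mul_nonneg hP.le hP.le) (sq_nonneg (x 2)),
            mul_pos (sub_pos.mpr hpt) h3sq]
        nlinarith [key, hP]
end

section
/- (Alinhac's good-unknown identity.) Let A₁, A₂, A₃ : ℝ⁴ → M₄(ℝ) be C¹ matrix-valued maps, Ω ⊆ ℝ³ open, U : Ω → ℝ⁴ and Ψ : Ω → ℝ of class C² with ∂ᵧΨ ≠ 0 on Ω, and V : Ω → ℝ⁴, Φ : Ω → ℝ of class C¹. Define L(U,∇Ψ)W := A₁(U)∂ₓW + (1/∂ᵧΨ)(A₂(U) − ∂ₓΨ·A₁(U) − ∂_zΨ·A₃(U))∂ᵧW + A₃(U)∂_zW; C(U,∇U,∇Ψ)W := (dA₁(U)·W)∂ₓU + (dA₃(U)·W)∂_zU + (1/∂ᵧΨ)[dA₂(U)·W − ∂ₓΨ(dA₁(U)·W) − ∂_zΨ(dA₃(U)·W)]∂ᵧU, where dAᵢ(U)·W denotes the directional derivative of Aᵢ at U in direction W; and the full linearized operator L′(U,∇Ψ)(V,Φ)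 := L(U,∇Ψ)V + C(U,∇U,∇Ψ)V − (∂ᵧΦ/(∂ᵧΨ)²)(A₂(U) − ∂ₓΨ·A₁(U) − ∂_zΨ·A₃(U))∂ᵧU − (1/∂ᵧΨ)(∂ₓΦ·A₁(U) + ∂_zΦ·A₃(U))∂ᵧU. Then, with the good unknown V̇ := V − (Φ/∂ᵧΨ)∂ᵧU, the following identity holds pointwise on Ω: L′(U,∇Ψ)(V,Φ) = L(U,∇Ψ)V̇ + C(U,∇U,∇Ψ)V̇ + (Φ/∂ᵧΨ)∂ᵧ[L(U,∇Ψ)U]. -/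
open Matrix

/-- Partial derivative in the `x`-direction of a function on `ℝ × ℝ × ℝ`. -/
noncomputable def pdx {F : Type*} [NormedAddCommGroup F] [NormedSpace ℝ F]
    (f : ℝ × ℝ × ℝ → F) (q : ℝ × ℝ × ℝ) : F := fderiv ℝ f q (1, 0, 0)

/-- Partial derivative in the `y`-direction of a function on `ℝ × ℝ × ℝ`. -/
noncomputable def pdy {F : Type*} [NormedAddCommGroup F] [NormedSpace ℝ F]
    (f : ℝ × ℝ × ℝ → F) (q : ℝ × ℝ × ℝ) : F := fderiv ℝ f q (0, 1, 0)

/-- Partial derivative in the `z`-direction of a function on `ℝ × ℝ × ℝ`. -/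
noncomputable def pdz {F : Type*} [NormedAddCommGroup F] [NormedSpace ℝ F]
    (f : ℝ × ℝ × ℝ → F) (q : ℝ × ℝ × ℝ) : F := fderiv ℝ f q (0, 0, 1)

/-- Directional derivative `dA(U)·W` of a matrix-valued map, entrywise. -/
noncomputable def dA (A : (Fin 4 → ℝ) → Matrix (Fin 4) (Fin 4) ℝ)
    (U W : Fin 4 → ℝ) : Matrix (Fin 4) (Fin 4) ℝ :=
  Matrix.of fun i j => fderiv ℝ (fun u => A u i j) U W

/-- The boundary matrix `A₂(U) − ∂ₓΨ·A₁(U) − ∂_zΨ·A₃(U)`. -/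
noncomputable def coefMat (A₁ A₂ A₃ : (Fin 4 → ℝ) → Matrix (Fin 4) (Fin 4) ℝ)
    (U : ℝ × ℝ × ℝ → Fin 4 → ℝ) (Ψ : ℝ × ℝ × ℝ → ℝ) (q : ℝ × ℝ × ℝ) :
    Matrix (Fin 4) (Fin 4) ℝ :=
  A₂ (U q) - pdx Ψ q • A₁ (U q) - pdz Ψ q • A₃ (U q)

/-- The operator `L(U,∇Ψ)W`. -/
noncomputable def Lop (A₁ A₂ A₃ : (Fin 4 → ℝ) → Matrix (Fin 4) (Fin 4) ℝ)
    (U : ℝ × ℝ × ℝ → Fin 4 → ℝ) (Ψ : ℝ × ℝ × ℝ → ℝ)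
    (W : ℝ × ℝ × ℝ → Fin 4 → ℝ) (q : ℝ × ℝ × ℝ) : Fin 4 → ℝ :=
  A₁ (U q) *ᵥ pdx W q + (1 / pdy Ψ q) • (coefMat A₁ A₂ A₃ U Ψ q *ᵥ pdy W q)
    + A₃ (U q) *ᵥ pdz W q

/-- The zero-order operator `C(U,∇U,∇Ψ)W`. -/
noncomputable def Cop (A₁ A₂ A₃ : (Fin 4 → ℝ) → Matrix (Fin 4) (Fin 4) ℝ)
    (U : ℝ × ℝ × ℝ → Fin 4 → ℝ) (Ψ : ℝ × ℝ × ℝ → ℝ)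
    (W : ℝ × ℝ × ℝ → Fin 4 → ℝ) (q : ℝ × ℝ × ℝ) : Fin 4 → ℝ :=
  dA A₁ (U q) (W q) *ᵥ pdx U q + dA A₃ (U q) (W q) *ᵥ pdz U q
    + (1 / pdy Ψ q) •
        ((dA A₂ (U q) (W q) - pdx Ψ q • dA A₁ (U q) (W q)
            - pdz Ψ q • dA A₃ (U q) (W q)) *ᵥ pdy U q)

/-- The full linearized operator `L′(U,∇Ψ)(V,Φ)`. -/
noncomputable def L'op (A₁ A₂ A₃ : (Fin 4 → ℝ) → Matrix (Fin 4) (Fin 4) ℝ)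
    (U : ℝ × ℝ × ℝ → Fin 4 → ℝ) (Ψ : ℝ × ℝ × ℝ → ℝ)
    (V : ℝ × ℝ × ℝ → Fin 4 → ℝ) (Φ : ℝ × ℝ × ℝ → ℝ) (q : ℝ × ℝ × ℝ) : Fin 4 → ℝ :=
  Lop A₁ A₂ A₃ U Ψ V q + Cop A₁ A₂ A₃ U Ψ V q
    - (pdy Φ q / (pdy Ψ q) ^ 2) • (coefMat A₁ A₂ A₃ U Ψ q *ᵥ pdy U q)
    - (1 / pdy Ψ q) • ((pdx Φ q • A₁ (U q) + pdz Φ q • A₃ (U q)) *ᵥ pdy U q)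

section helpers
variable {E : Type*} [NormedAddCommGroup E] [NormedSpace ℝ E] {q : E}

lemma pd_comp_apply {F : Type*} [NormedAddCommGroup F] [NormedSpace ℝ F]
    {f : E → (E →L[ℝ] F)} (hf : DifferentiableAt ℝ f q) (w v : E) :
    fderiv ℝ (fun p => f p w) q v = fderiv ℝ f q v w := by
  rw [fderiv_clm_apply hf (differentiableAt_const w)]
  simp

lemma pd_proj {ι : Type*} [Fintype ι] {F : E → ι → ℝ} (hF : DifferentiableAt ℝ F q)
    (v : E) (i : ι) :
    fderiv ℝ (fun p => F p i) q v = fderiv ℝ F q v i := by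
  rw [show fderiv ℝ F q = ContinuousLinearMap.pi (fun i => fderiv ℝ (fun p => F p i) q) from
    fderiv_pi (fun i => differentiableAt_pi.1 hF i)]
  simp

lemma pd_add {F : Type*} [NormedAddCommGroup F] [NormedSpace ℝ F]
    {f g : E → F} (hf : DifferentiableAt ℝ f q) (hg : DifferentiableAt ℝ g q) (v : E) :
    fderiv ℝ (fun p => f p + g p) q v = fderiv ℝ f q v + fderiv ℝ g q v := by
  rw [fderiv_fun_add hf hg]; simp

lemma pd_sub {F : Type*} [NormedAddCommGroup F] [NormedSpace ℝ F]
    {f g : E → F} (hf : DifferentiableAt ℝ f q) (hg : DifferentiableAt ℝ g q) (v : E) :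
    fderiv ℝ (fun p => f p - g p) q v = fderiv ℝ f q v - fderiv ℝ g q v := by
  rw [fderiv_fun_sub hf hg]; simp

lemma pd_mul {f g : E → ℝ} (hf : DifferentiableAt ℝ f q) (hg : DifferentiableAt ℝ g q) (v : E) :
    fderiv ℝ (fun p => f p * g p) q v = fderiv ℝ f q v * g q + f q * fderiv ℝ g q v := by
  rw [fderiv_fun_mul hf hg]; simp; ring

lemma pd_smul {F : Type*} [NormedAddCommGroup F] [NormedSpace ℝ F]
    {c : E → ℝ} {f : E → F} (hc : DifferentiableAt ℝ c q) (hf : DifferentiableAt ℝ f q) (v : E) :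
    fderiv ℝ (fun p => c p • f p) q v = fderiv ℝ c q v • f q + c q • fderiv ℝ f q v := by
  rw [fderiv_fun_smul hc hf]; simp [add_comm]

lemma diff_div {f g : E → ℝ} (hf : DifferentiableAt ℝ f q) (hg : DifferentiableAt ℝ g q)
    (h0 : g q ≠ 0) : DifferentiableAt ℝ (fun p => f p / g p) q := by
  simp only [div_eq_mul_inv]
  exact hf.mul ((differentiableAt_inv h0).comp q hg)

lemma pd_div {f g : E → ℝ} (hf : DifferentiableAt ℝ f q) (hg : DifferentiableAt ℝ g q)
    (h0 : g q ≠ 0) (v : E) :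
    fderiv ℝ (fun p => f p / g p) q v
      = (fderiv ℝ f q v * g q - f q * fderiv ℝ g q v) / g q ^ 2 := by
  have hinv : HasFDerivAt (fun p => (g p)⁻¹)
      ((ContinuousLinearMap.smulRight (1 : ℝ →L[ℝ] ℝ) (-(g q ^ 2)⁻¹)).comp (fderiv ℝ g q)) q :=
    (hasFDerivAt_inv h0).comp q hg.hasFDerivAt
  have h := hf.hasFDerivAt.mul hinv
  have h2 : fderiv ℝ (fun p => f p * (g p)⁻¹) q
      = f q • ((ContinuousLinearMap.smulRight (1 : ℝ →L[ℝ] ℝ) (-(g q ^ 2)⁻¹)).comp (fderiv ℝ g q))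
        + (g q)⁻¹ • fderiv ℝ f q := h.fderiv
  simp only [div_eq_mul_inv]
  rw [h2]
  simp only [ContinuousLinearMap.add_apply, ContinuousLinearMap.smul_apply,
    ContinuousLinearMap.comp_apply, ContinuousLinearMap.smulRight_apply,
    ContinuousLinearMap.one_apply, smul_eq_mul]
  field_simp
  ring

lemma pd_one_div {g : E → ℝ} (hg : DifferentiableAt ℝ g q) (h0 : g q ≠ 0) (v : E) :
    fderiv ℝ (fun p => 1 / g p) q v = -fderiv ℝ g q v / g q ^ 2 := by
  rw [pd_div (differentiableAt_const 1) hg h0]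
  simp

lemma pd_sum {ι : Type*} {s : Finset ι} {f : ι → E → ℝ}
    (hf : ∀ i ∈ s, DifferentiableAt ℝ (f i) q) (v : E) :
    fderiv ℝ (fun p => ∑ i ∈ s, f i p) q v = ∑ i ∈ s, fderiv ℝ (f i) q v := by
  rw [fderiv_fun_sum hf]; simp

lemma diff_mulVec {M : E → Matrix (Fin 4) (Fin 4) ℝ} {w : E → Fin 4 → ℝ}
    (hM : ∀ i j, DifferentiableAt ℝ (fun p => M p i j) q) (hw : DifferentiableAt ℝ w q) :
    DifferentiableAt ℝ (fun p => M p *ᵥ w p) q := by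
  refine differentiableAt_pi.2 fun i => ?_
  simp only [Matrix.mulVec, dotProduct]
  exact DifferentiableAt.fun_sum fun j _ => (hM i j).mul (differentiableAt_pi.1 hw j)

lemma pd_mulVec {M : E → Matrix (Fin 4) (Fin 4) ℝ} {w : E → Fin 4 → ℝ}
    {M' : Matrix (Fin 4) (Fin 4) ℝ} {v : E}
    (hMd : ∀ i j, DifferentiableAt ℝ (fun p => M p i j) q)
    (hM' : ∀ i j, fderiv ℝ (fun p => M p i j) q v = M' i j)
    (hw : DifferentiableAt ℝ w q) :
    fderiv ℝ (fun p => M p *ᵥ w p) q v = M' *ᵥ w q + M q *ᵥ fderiv ℝ w q v := by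
  funext i
  have hd := diff_mulVec hMd hw
  rw [← pd_proj hd v i]
  have h1 : (fun p => (M p *ᵥ w p) i) = fun p => ∑ j, M p i j * w p j := by
    funext p; simp [Matrix.mulVec, dotProduct]
  rw [h1, pd_sum (fun j _ => (hMd i j).fun_mul (differentiableAt_pi.1 hw j))]
  simp only [Pi.add_apply, Matrix.mulVec, dotProduct]
  rw [← Finset.sum_add_distrib]
  refine Finset.sum_congr rfl fun j _ => ?_
  rw [pd_mul (hMd i j) (differentiableAt_pi.1 hw j), hM' i j, pd_proj hw v j]

lemma pd_entry_comp {A : (Fin 4 → ℝ) → Matrix (Fin 4) (Fin 4) ℝ}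
    (hA : ∀ i j, ContDiff ℝ 1 fun u => A u i j) {U : ℝ × ℝ × ℝ → Fin 4 → ℝ} {p : ℝ × ℝ × ℝ}
    (hU : DifferentiableAt ℝ U p) (v : ℝ × ℝ × ℝ) (i j : Fin 4) :
    fderiv ℝ (fun x => A (U x) i j) p v = dA A (U p) (fderiv ℝ U p v) i j := by
  have h : fderiv ℝ (fun x => A (U x) i j) p
      = (fderiv ℝ (fun u => A u i j) (U p)).comp (fderiv ℝ U p) :=
    fderiv_comp p ((hA i j).differentiable one_ne_zero (U p)) hU
  rw [h]; simp [dA]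

lemma dA_sub_smul (A : (Fin 4 → ℝ) → Matrix (Fin 4) (Fin 4) ℝ) (u x y : Fin 4 → ℝ) (c : ℝ) :
    dA A u (x - c • y) = dA A u x - c • dA A u y := by
  ext i j
  simp [dA, map_sub, _root_.map_smul, smul_eq_mul]

end helpers

set_option maxHeartbeats 4000000 in
/-- **Alinhac's good-unknown identity**: with `V̇ := V − (Φ/∂ᵧΨ)∂ᵧU`, one has
`L′(U,∇Ψ)(V,Φ) = L(U,∇Ψ)V̇ + C(U,∇U,∇Ψ)V̇ + (Φ/∂ᵧΨ)∂ᵧ[L(U,∇Ψ)U]` pointwise. -/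
theorem stmt7 (A₁ A₂ A₃ : (Fin 4 → ℝ) → Matrix (Fin 4) (Fin 4) ℝ)
    (hA₁ : ∀ i j, ContDiff ℝ 1 fun u => A₁ u i j)
    (hA₂ : ∀ i j, ContDiff ℝ 1 fun u => A₂ u i j)
    (hA₃ : ∀ i j, ContDiff ℝ 1 fun u => A₃ u i j)
    (Ω : Set (ℝ × ℝ × ℝ)) (hΩ : IsOpen Ω)
    (U : ℝ × ℝ × ℝ → Fin 4 → ℝ) (Ψ : ℝ × ℝ × ℝ → ℝ)
    (hU : ContDiffOn ℝ 2 U Ω) (hΨ : ContDiffOn ℝ 2 Ψ Ω)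
    (hΨy : ∀ q ∈ Ω, pdy Ψ q ≠ 0)
    (V : ℝ × ℝ × ℝ → Fin 4 → ℝ) (Φ : ℝ × ℝ × ℝ → ℝ)
    (hV : ContDiffOn ℝ 1 V Ω) (hΦ : ContDiffOn ℝ 1 Φ Ω) :
    ∀ q ∈ Ω,
      L'op A₁ A₂ A₃ U Ψ V Φ q =
        Lop A₁ A₂ A₃ U Ψ (fun q' => V q' - (Φ q' / pdy Ψ q') • pdy U q') q
          + Cop A₁ A₂ A₃ U Ψ (fun q' => V q' - (Φ q' / pdy Ψ q') • pdy U q') q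
          + (Φ q / pdy Ψ q) • pdy (Lop A₁ A₂ A₃ U Ψ U) q := by
  intro q hq
  have hmem : Ω ∈ nhds q := hΩ.mem_nhds hq
  have hUq : ContDiffAt ℝ 2 U q := hU.contDiffAt hmem
  have hΨq : ContDiffAt ℝ 2 Ψ q := hΨ.contDiffAt hmem
  have hUd : DifferentiableAt ℝ U q := hUq.differentiableAt two_ne_zero
  have hΨd : DifferentiableAt ℝ Ψ q := hΨq.differentiableAt two_ne_zero
  have hVd : DifferentiableAt ℝ V q := (hV.contDiffAt hmem).differentiableAt one_ne_zero
  have hΦd : DifferentiableAt ℝ Φ q := (hΦ.contDiffAt hmem).differentiableAt one_ne_zero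
  have hDU : DifferentiableAt ℝ (fderiv ℝ U) q :=
    (hUq.fderiv_right (by norm_num)).differentiableAt one_ne_zero
  have hDΨ : DifferentiableAt ℝ (fderiv ℝ Ψ) q :=
    (hΨq.fderiv_right (by norm_num)).differentiableAt one_ne_zero
  have hDUv : ∀ v : ℝ × ℝ × ℝ, DifferentiableAt ℝ (fun p => fderiv ℝ U p v) q :=
    fun v => hDU.clm_apply (differentiableAt_const v)
  have hDΨv : ∀ v : ℝ × ℝ × ℝ, DifferentiableAt ℝ (fun p => fderiv ℝ Ψ p v) q :=
    fun v => hDΨ.clm_apply (differentiableAt_const v)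
  have hψ2 : fderiv ℝ Ψ q (0, 1, 0) ≠ 0 := by simpa [pdy] using hΨy q hq
  have hsU : ∀ v w, fderiv ℝ (fderiv ℝ U) q v w = fderiv ℝ (fderiv ℝ U) q w v :=
    fun v w => hUq.isSymmSndFDerivAt (by simp) v w
  have hsΨ : ∀ v w, fderiv ℝ (fderiv ℝ Ψ) q v w = fderiv ℝ (fderiv ℝ Ψ) q w v :=
    fun v w => hΨq.isSymmSndFDerivAt (by simp) v w
  have hA1e : ∀ i j, DifferentiableAt ℝ (fun p => A₁ (U p) i j) q :=
    fun i j => DifferentiableAt.comp q ((hA₁ i j).differentiable one_ne_zero (U q)) hUd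
  have hA2e : ∀ i j, DifferentiableAt ℝ (fun p => A₂ (U p) i j) q :=
    fun i j => DifferentiableAt.comp q ((hA₂ i j).differentiable one_ne_zero (U q)) hUd
  have hA3e : ∀ i j, DifferentiableAt ℝ (fun p => A₃ (U p) i j) q :=
    fun i j => DifferentiableAt.comp q ((hA₃ i j).differentiable one_ne_zero (U q)) hUd
  -- the coefficient matrix entries, as functions of the base point
  have hCMeq : ∀ i j, (fun p =>
      (A₂ (U p) - fderiv ℝ Ψ p (1, 0, 0) • A₁ (U p) - fderiv ℝ Ψ p (0, 0, 1) • A₃ (U p)) i j)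
      = fun p => A₂ (U p) i j - fderiv ℝ Ψ p (1, 0, 0) * A₁ (U p) i j
          - fderiv ℝ Ψ p (0, 0, 1) * A₃ (U p) i j := by
    intro i j; funext p; simp [Matrix.sub_apply, Matrix.smul_apply]
  have hCMe : ∀ i j, DifferentiableAt ℝ (fun p =>
      (A₂ (U p) - fderiv ℝ Ψ p (1, 0, 0) • A₁ (U p)
        - fderiv ℝ Ψ p (0, 0, 1) • A₃ (U p)) i j) q := by
    intro i j
    rw [hCMeq i j]
    exact ((hA2e i j).sub ((hDΨv _).mul (hA1e i j))).sub ((hDΨv _).mul (hA3e i j))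
  have hCMpd : ∀ i j, fderiv ℝ (fun p =>
      (A₂ (U p) - fderiv ℝ Ψ p (1, 0, 0) • A₁ (U p)
        - fderiv ℝ Ψ p (0, 0, 1) • A₃ (U p)) i j) q (0, 1, 0)
      = (dA A₂ (U q) (fderiv ℝ U q (0, 1, 0))
          - (fderiv ℝ (fderiv ℝ Ψ) q (0, 1, 0) (1, 0, 0) • A₁ (U q)
              + fderiv ℝ Ψ q (1, 0, 0) • dA A₁ (U q) (fderiv ℝ U q (0, 1, 0)))
          - (fderiv ℝ (fderiv ℝ Ψ) q (0, 1, 0) (0, 0, 1) • A₃ (U q)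
              + fderiv ℝ Ψ q (0, 0, 1) • dA A₃ (U q) (fderiv ℝ U q (0, 1, 0)))) i j := by
    intro i j
    rw [hCMeq i j]
    rw [pd_sub ((hA2e i j).fun_sub ((hDΨv _).fun_mul (hA1e i j))) ((hDΨv _).fun_mul (hA3e i j)),
      pd_sub (hA2e i j) ((hDΨv _).fun_mul (hA1e i j)),
      pd_mul (hDΨv (1, 0, 0)) (hA1e i j), pd_mul (hDΨv (0, 0, 1)) (hA3e i j),
      pd_comp_apply hDΨ (1, 0, 0), pd_comp_apply hDΨ (0, 0, 1),
      pd_entry_comp hA₂ hUd, pd_entry_comp hA₁ hUd, pd_entry_comp hA₃ hUd]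
    simp [Matrix.sub_apply, Matrix.smul_apply, Matrix.add_apply]
  -- derivative of the good unknown
  have hVdot : ∀ v : ℝ × ℝ × ℝ,
      fderiv ℝ (fun q' => V q' - (Φ q' / fderiv ℝ Ψ q' (0, 1, 0)) • fderiv ℝ U q' (0, 1, 0)) q v
      = fderiv ℝ V q v -
          (((fderiv ℝ Φ q v * fderiv ℝ Ψ q (0, 1, 0)
              - Φ q * fderiv ℝ (fderiv ℝ Ψ) q v (0, 1, 0)) / fderiv ℝ Ψ q (0, 1, 0) ^ 2)
              • fderiv ℝ U q (0, 1, 0)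
            + (Φ q / fderiv ℝ Ψ q (0, 1, 0)) • fderiv ℝ (fderiv ℝ U) q v (0, 1, 0)) := by
    intro v
    have hgd : DifferentiableAt ℝ (fun p => Φ p / fderiv ℝ Ψ p (0, 1, 0)) q :=
      diff_div hΦd (hDΨv _) hψ2
    rw [pd_sub hVd (hgd.fun_smul (hDUv _)) v, pd_smul hgd (hDUv _) v,
      pd_div hΦd (hDΨv _) hψ2 v, pd_comp_apply hDΨ (0, 1, 0) v, pd_comp_apply hDU (0, 1, 0) v]
  -- derivative of L(U,∇Ψ)U in the y-direction
  have hd1 : DifferentiableAt ℝ (fun q' => A₁ (U q') *ᵥ fderiv ℝ U q' (1, 0, 0)) q :=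
    diff_mulVec hA1e (hDUv _)
  have hd3 : DifferentiableAt ℝ (fun q' => A₃ (U q') *ᵥ fderiv ℝ U q' (0, 0, 1)) q :=
    diff_mulVec hA3e (hDUv _)
  have hdivd : DifferentiableAt ℝ (fun q' => 1 / fderiv ℝ Ψ q' (0, 1, 0)) q :=
    diff_div (differentiableAt_const 1) (hDΨv _) hψ2
  have hGd : DifferentiableAt ℝ (fun q' =>
      (A₂ (U q') - fderiv ℝ Ψ q' (1, 0, 0) • A₁ (U q') - fderiv ℝ Ψ q' (0, 0, 1) • A₃ (U q'))
        *ᵥ fderiv ℝ U q' (0, 1, 0)) q := diff_mulVec hCMe (hDUv _)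
  have hLU : fderiv ℝ (fun q' =>
        A₁ (U q') *ᵥ fderiv ℝ U q' (1, 0, 0)
          + (1 / fderiv ℝ Ψ q' (0, 1, 0)) •
              ((A₂ (U q') - fderiv ℝ Ψ q' (1, 0, 0) • A₁ (U q')
                  - fderiv ℝ Ψ q' (0, 0, 1) • A₃ (U q')) *ᵥ fderiv ℝ U q' (0, 1, 0))
          + A₃ (U q') *ᵥ fderiv ℝ U q' (0, 0, 1)) q (0, 1, 0)
      = (dA A₁ (U q) (fderiv ℝ U q (0, 1, 0)) *ᵥ fderiv ℝ U q (1, 0, 0)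
           + A₁ (U q) *ᵥ fderiv ℝ (fderiv ℝ U) q (0, 1, 0) (1, 0, 0))
        + ((-fderiv ℝ (fderiv ℝ Ψ) q (0, 1, 0) (0, 1, 0) / fderiv ℝ Ψ q (0, 1, 0) ^ 2) •
              ((A₂ (U q) - fderiv ℝ Ψ q (1, 0, 0) • A₁ (U q)
                  - fderiv ℝ Ψ q (0, 0, 1) • A₃ (U q)) *ᵥ fderiv ℝ U q (0, 1, 0))
            + (1 / fderiv ℝ Ψ q (0, 1, 0)) •
              ((dA A₂ (U q) (fderiv ℝ U q (0, 1, 0))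
                  - (fderiv ℝ (fderiv ℝ Ψ) q (0, 1, 0) (1, 0, 0) • A₁ (U q)
                      + fderiv ℝ Ψ q (1, 0, 0) • dA A₁ (U q) (fderiv ℝ U q (0, 1, 0)))
                  - (fderiv ℝ (fderiv ℝ Ψ) q (0, 1, 0) (0, 0, 1) • A₃ (U q)
                      + fderiv ℝ Ψ q (0, 0, 1) • dA A₃ (U q) (fderiv ℝ U q (0, 1, 0))))
                 *ᵥ fderiv ℝ U q (0, 1, 0)
                + (A₂ (U q) - fderiv ℝ Ψ q (1, 0, 0) • A₁ (U q)
                    - fderiv ℝ Ψ q (0, 0, 1) • A₃ (U q))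
                   *ᵥ fderiv ℝ (fderiv ℝ U) q (0, 1, 0) (0, 1, 0)))
        + (dA A₃ (U q) (fderiv ℝ U q (0, 1, 0)) *ᵥ fderiv ℝ U q (0, 0, 1)
           + A₃ (U q) *ᵥ fderiv ℝ (fderiv ℝ U) q (0, 1, 0) (0, 0, 1)) := by
    rw [pd_add (hd1.fun_add (hdivd.fun_smul hGd)) hd3 (0, 1, 0),
      pd_add hd1 (hdivd.fun_smul hGd) (0, 1, 0),
      pd_mulVec hA1e (fun i j => pd_entry_comp hA₁ hUd (0, 1, 0) i j) (hDUv _),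
      pd_mulVec hA3e (fun i j => pd_entry_comp hA₃ hUd (0, 1, 0) i j) (hDUv _),
      pd_smul hdivd hGd (0, 1, 0),
      pd_one_div (hDΨv _) hψ2 (0, 1, 0),
      pd_mulVec hCMe hCMpd (hDUv _),
      pd_comp_apply hDU (1, 0, 0) (0, 1, 0),
      pd_comp_apply hDU (0, 1, 0) (0, 1, 0),
      pd_comp_apply hDU (0, 0, 1) (0, 1, 0),
      pd_comp_apply hDΨ (0, 1, 0) (0, 1, 0)]
  -- assemble
  have hLopU : Lop A₁ A₂ A₃ U Ψ U = fun q' =>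
      A₁ (U q') *ᵥ fderiv ℝ U q' (1, 0, 0)
        + (1 / fderiv ℝ Ψ q' (0, 1, 0)) •
            ((A₂ (U q') - fderiv ℝ Ψ q' (1, 0, 0) • A₁ (U q')
                - fderiv ℝ Ψ q' (0, 0, 1) • A₃ (U q')) *ᵥ fderiv ℝ U q' (0, 1, 0))
        + A₃ (U q') *ᵥ fderiv ℝ U q' (0, 0, 1) := rfl
  simp only [L'op, Lop, Cop, coefMat, pdx, pdy, pdz]
  rw [hLopU, hLU, hVdot (1, 0, 0), hVdot (0, 1, 0), hVdot (0, 0, 1)]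
  rw [hsU (0, 1, 0) (1, 0, 0), hsU (0, 1, 0) (0, 0, 1),
    hsΨ (0, 1, 0) (1, 0, 0), hsΨ (0, 1, 0) (0, 0, 1)]
  simp only [dA_sub_smul, Matrix.sub_mulVec, Matrix.add_mulVec, Matrix.smul_mulVec,
    Matrix.mulVec_add, Matrix.mulVec_sub, Matrix.mulVec_smul, smul_add, smul_sub, smul_smul]
  match_scalars <;> field_simp [hψ2] <;> ring
end

section
/- (Weighted L² transport estimate.) Let a > 0, b ∈ ℝ, γ > 0, and let ξ : ℝ³ → ℝ be a C¹ function with compact support. Set h := a∂ₓξ + b∂_zξ. Then ∫_{ℝ³} e^{−2γx} ξ(x,y,z)² dx dy dz ≤ (aγ)^{−2} ∫_{ℝ³} e^{−2γx} h(x,y,z)² dx dy dz. -/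
open MeasureTheory

lemma oneD (γ : ℝ) (hγ : 0 < γ) (f : ℝ → ℝ) (hf : ContDiff ℝ 1 f)
    (hs : HasCompactSupport f) :
    γ ^ 2 * ∫ x : ℝ, Real.exp (-2 * γ * x) * f x ^ 2 ≤
      ∫ x : ℝ, Real.exp (-2 * γ * x) * deriv f x ^ 2 := by
  set w : ℝ → ℝ := fun x => Real.exp (-2 * γ * x) with hw
  have hwc : Continuous w := by fun_prop
  have hfc : Continuous f := hf.continuous
  have hf'c : Continuous (deriv f) := hf.continuous_deriv le_rfl
  have hs2 : HasCompactSupport fun x => f x ^ 2 :=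
    hs.comp_left (g := (· ^ 2)) (by simp)
  have hs2' : HasCompactSupport fun x => (deriv f x) ^ 2 :=
    hs.deriv.comp_left (g := (· ^ 2)) (by simp)
  have hsff' : HasCompactSupport fun x => f x * deriv f x := hs.mul_right
  set g : ℝ → ℝ := fun x => w x * f x ^ 2 with hg
  have hgs : HasCompactSupport g := hs2.mul_left
  have hgC1 : ContDiff ℝ 1 g := by
    apply ContDiff.mul
    · exact (Real.contDiff_exp.comp ((contDiff_const.mul contDiff_id))).of_le le_top
    · exact hf.pow 2
  have hgder : ∀ x, HasDerivAt g ((-2 * γ * w x) * f x ^ 2 + w x * (2 * f x * deriv f x)) x := by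
    intro x
    have h1 : HasDerivAt w (-2 * γ * w x) x := by
      simpa [hw, mul_comm] using (((hasDerivAt_id x).const_mul (-2 * γ)).exp)
    have h2 : HasDerivAt (fun y => f y ^ 2) (2 * f x * deriv f x) x := by
      simpa using ((hf.differentiable one_ne_zero x).hasDerivAt.fun_pow 2)
    exact h1.mul h2
  have hdg : deriv g = fun x => (-2 * γ * w x) * f x ^ 2 + w x * (2 * f x * deriv f x) :=
    funext fun x => (hgder x).deriv
  -- integrability
  have hA : Integrable (fun x => w x * f x ^ 2) :=
    (hwc.mul (hfc.pow 2)).integrable_of_hasCompactSupport hs2.mul_left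
  have hB : Integrable (fun x => w x * (deriv f x) ^ 2) :=
    (hwc.mul (hf'c.pow 2)).integrable_of_hasCompactSupport hs2'.mul_left
  have hC : Integrable (fun x => w x * (f x * deriv f x)) :=
    (hwc.mul (hfc.mul hf'c)).integrable_of_hasCompactSupport hsff'.mul_left
  -- ∫ deriv g = 0
  have hGint : Integrable (deriv g) :=
    (hgC1.continuous_deriv le_rfl).integrable_of_hasCompactSupport hgs.deriv
  have h0 : ∫ x, deriv g x = 0 := by
    have h1 : ∫ x in Set.Iic 0, deriv g x = g 0 :=
      HasCompactSupport.integral_Iic_deriv_eq hgC1 hgs 0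
    have h2 : ∫ x in Set.Ioi 0, deriv g x = -g 0 :=
      HasCompactSupport.integral_Ioi_deriv_eq hgC1 hgs 0
    have h3 := intervalIntegral.integral_Iic_add_Ioi (b := 0) hGint.integrableOn hGint.integrableOn
    linarith
  have key : γ * ∫ x, w x * f x ^ 2 = ∫ x, w x * (f x * deriv f x) := by
    have he : ∀ x, deriv g x =
        (-2 * γ) * (w x * f x ^ 2) + 2 * (w x * (f x * deriv f x)) := by
      intro x; rw [hdg]; ring
    have h4 : (0 : ℝ) = ∫ x, ((-2 * γ) * (w x * f x ^ 2) + 2 * (w x * (f x * deriv f x))) := by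
      rw [← integral_congr_ae (Filter.Eventually.of_forall he), h0]
    rw [integral_add ((hA.const_mul _)) ((hC.const_mul _)), integral_const_mul,
      integral_const_mul] at h4
    linarith
  -- pointwise AM-GM
  have key2 : ∀ x, 2 * γ * (w x * (f x * deriv f x)) ≤
      γ ^ 2 * (w x * f x ^ 2) + w x * (deriv f x) ^ 2 := by
    intro x
    have hw0 : (0 : ℝ) < w x := Real.exp_pos _
    nlinarith [mul_nonneg hw0.le (sq_nonneg (γ * f x - deriv f x))]
  have h5 : ∫ x, 2 * γ * (w x * (f x * deriv f x)) ≤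
      ∫ x, (γ ^ 2 * (w x * f x ^ 2) + w x * (deriv f x) ^ 2) :=
    integral_mono (hC.const_mul _) ((hA.const_mul _).add hB) key2
  rw [integral_const_mul, integral_add (hA.const_mul _) hB, integral_const_mul] at h5
  nlinarith [key, h5]

noncomputable def shearEquiv (c : ℝ) : (ℝ × ℝ × ℝ) ≃ᵐ (ℝ × ℝ × ℝ) :=
  { toFun := fun q => (q.1, q.2.1, q.2.2 + c * q.1)
    invFun := fun q => (q.1, q.2.1, q.2.2 - c * q.1)
    left_inv := fun q => by ext <;> simp
    right_inv := fun q => by ext <;> simp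
    measurable_toFun := show Measurable (fun q : ℝ × ℝ × ℝ => ((q.1, q.2.1, q.2.2 + c * q.1) : ℝ × ℝ × ℝ)) by fun_prop
    measurable_invFun := show Measurable (fun q : ℝ × ℝ × ℝ => ((q.1, q.2.1, q.2.2 - c * q.1) : ℝ × ℝ × ℝ)) by fun_prop }

lemma shear_integral (c : ℝ) (F : ℝ × ℝ × ℝ → ℝ) :
    ∫ q : ℝ × ℝ × ℝ, F (q.1, q.2.1, q.2.2 + c * q.1) = ∫ q : ℝ × ℝ × ℝ, F q := by
  have hmp : MeasurePreserving (shearEquiv c) volume volume := by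
    have h : MeasurePreserving
        (fun p : ℝ × (ℝ × ℝ) => (p.1, (p.2.1, p.2.2 + c * p.1)))
        ((volume : Measure ℝ).prod (volume : Measure (ℝ × ℝ)))
        ((volume : Measure ℝ).prod (volume : Measure (ℝ × ℝ))) := by
      exact MeasurePreserving.skew_product
        (f := fun x : ℝ => x)
        (g := fun (x : ℝ) (r : ℝ × ℝ) => (r.1, r.2 + c * x))
        (MeasurePreserving.id (volume : Measure ℝ))
        (by fun_prop)
        (Filter.Eventually.of_forall fun x =>
          (((MeasurePreserving.id (volume : Measure ℝ)).prod
            (measurePreserving_add_right (volume : Measure ℝ) (c * x)))).map_eq)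
    exact h
  exact hmp.integral_comp' F

lemma threeD_x (γ : ℝ) (hγ : 0 < γ) (ξ : ℝ × ℝ × ℝ → ℝ) (hξ : ContDiff ℝ 1 ξ)
    (hs : HasCompactSupport ξ) :
    γ ^ 2 * ∫ q : ℝ × ℝ × ℝ, Real.exp (-2 * γ * q.1) * ξ q ^ 2 ≤
      ∫ q : ℝ × ℝ × ℝ, Real.exp (-2 * γ * q.1) * pdx ξ q ^ 2 := by
  set w : ℝ → ℝ := fun x => Real.exp (-2 * γ * x) with hw
  have hwc : Continuous w := by fun_prop
  have hξc : Continuous ξ := hξ.continuous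
  have hpdxc : Continuous (pdx ξ) :=
    (hξ.continuous_fderiv one_ne_zero).clm_apply continuous_const
  have hpdxs : HasCompactSupport (pdx ξ) := hs.fderiv_apply ℝ _
  -- integrands
  set F : ℝ × ℝ × ℝ → ℝ := fun q => w q.1 * ξ q ^ 2 with hF
  set K : ℝ × ℝ × ℝ → ℝ := fun q => w q.1 * pdx ξ q ^ 2 with hK
  have hFi : Integrable F := by
    apply Continuous.integrable_of_hasCompactSupport (by fun_prop)
    exact (hs.comp_left (g := (· ^ 2)) (by simp)).mul_left
  have hKi : Integrable K := by
    apply Continuous.integrable_of_hasCompactSupport (by fun_prop)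
    exact (hpdxs.comp_left (g := (· ^ 2)) (by simp)).mul_left
  -- slice properties
  have hslice : ∀ p : ℝ × ℝ, γ ^ 2 * ∫ x : ℝ, F (x, p) ≤ ∫ x : ℝ, K (x, p) := by
    intro p
    have hfC1 : ContDiff ℝ 1 (fun x : ℝ => ξ (x, p)) :=
      hξ.comp (ContDiff.prodMk contDiff_id contDiff_const)
    have hfs : HasCompactSupport (fun x : ℝ => ξ (x, p)) := by
      apply HasCompactSupport.intro (hs.image continuous_fst)
      intro x hx
      apply image_eq_zero_of_notMem_tsupport
      intro hmem
      exact hx ⟨(x, p), hmem, rfl⟩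
    have hderiv : ∀ x : ℝ, deriv (fun x : ℝ => ξ (x, p)) x = pdx ξ (x, p) := by
      intro x
      have hL : HasDerivAt (fun x : ℝ => ((x, p) : ℝ × ℝ × ℝ)) (1, 0, 0) x :=
        HasDerivAt.prodMk (hasDerivAt_id x) (hasDerivAt_const x p)
      exact ((hξ.differentiable one_ne_zero (x, p)).hasFDerivAt.comp_hasDerivAt x hL).deriv
    have := oneD γ hγ (fun x : ℝ => ξ (x, p)) hfC1 hfs
    simp only [hderiv] at this
    exact this
  -- Fubini
  rw [Measure.volume_eq_prod, integral_prod_symm F hFi, integral_prod_symm K hKi]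
  have h1 : Integrable (fun p : ℝ × ℝ => γ ^ 2 * ∫ x : ℝ, F (x, p)) :=
    (hFi.integral_prod_right).const_mul _
  have h2 : Integrable (fun p : ℝ × ℝ => ∫ x : ℝ, K (x, p)) := hKi.integral_prod_right
  calc γ ^ 2 * ∫ p : ℝ × ℝ, ∫ x : ℝ, F (x, p)
      = ∫ p : ℝ × ℝ, γ ^ 2 * ∫ x : ℝ, F (x, p) := (integral_const_mul _ _).symm
    _ ≤ ∫ p : ℝ × ℝ, ∫ x : ℝ, K (x, p) := integral_mono h1 h2 hslice

/-- **Weighted L² transport estimate**: for `a > 0`, `γ > 0` and a compactly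
supported `C¹` function `ξ`, with `h := a∂ₓξ + b∂_zξ` one has
`∫ e^{−2γx} ξ² ≤ (aγ)⁻² ∫ e^{−2γx} h²`. -/
theorem stmt10 (a b γ : ℝ) (ha : 0 < a) (hγ : 0 < γ)
    (ξ : ℝ × ℝ × ℝ → ℝ) (hξ : ContDiff ℝ 1 ξ) (hsupp : HasCompactSupport ξ) :
    ∫ q : ℝ × ℝ × ℝ, Real.exp (-2 * γ * q.1) * ξ q ^ 2 ≤
      ((a * γ) ^ 2)⁻¹ *
        ∫ q : ℝ × ℝ × ℝ, Real.exp (-2 * γ * q.1) * (a * pdx ξ q + b * pdz ξ q) ^ 2 := by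
  set c : ℝ := b / a with hc
  have hac : a * c = b := by rw [hc, mul_div_assoc']; exact mul_div_cancel_left₀ b ha.ne'
  set S : ℝ × ℝ × ℝ → ℝ × ℝ × ℝ := fun q => (q.1, q.2.1, q.2.2 + c * q.1) with hS
  set η : ℝ × ℝ × ℝ → ℝ := fun q => ξ (S q) with hη
  have hSc : ContDiff ℝ 1 S := by
    fun_prop
  have hηC1 : ContDiff ℝ 1 η := hξ.comp hSc
  have hηs : HasCompactSupport η := by
    have hT : Continuous (fun q : ℝ × ℝ × ℝ => ((q.1, q.2.1, q.2.2 - c * q.1) : ℝ × ℝ × ℝ)) := by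
      fun_prop
    apply HasCompactSupport.intro (hsupp.image hT)
    intro q hq
    exact image_eq_zero_of_notMem_tsupport (f := ξ)
      (fun hmem => hq ⟨S q, hmem, by simp [hS]⟩)
  -- the continuous linear map equal to S
  set L : (ℝ × ℝ × ℝ) →L[ℝ] (ℝ × ℝ × ℝ) :=
    (ContinuousLinearMap.fst ℝ ℝ (ℝ × ℝ)).prod
      (((ContinuousLinearMap.fst ℝ ℝ ℝ).comp (ContinuousLinearMap.snd ℝ ℝ (ℝ × ℝ))).prod
        (((ContinuousLinearMap.snd ℝ ℝ ℝ).comp (ContinuousLinearMap.snd ℝ ℝ (ℝ × ℝ))) +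
          c • (ContinuousLinearMap.fst ℝ ℝ (ℝ × ℝ)))) with hL
  have hLS : ∀ q : ℝ × ℝ × ℝ, L q = S q := by
    intro q
    simp [hL, hS, smul_eq_mul]
  have hpdxη : ∀ q, pdx η q = pdx ξ (S q) + c * pdz ξ (S q) := by
    intro q
    have h1 : HasFDerivAt S L q :=
      L.hasFDerivAt.congr_of_eventuallyEq (Filter.Eventually.of_forall fun q => (hLS q).symm)
    have h2 : HasFDerivAt η ((fderiv ℝ ξ (S q)).comp L) q :=
      ((hξ.differentiable one_ne_zero (S q)).hasFDerivAt.comp q h1)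
    have hv : ((1, 0, c) : ℝ × ℝ × ℝ) = (1, 0, 0) + c • ((0, 0, 1) : ℝ × ℝ × ℝ) := by
      simp
    rw [pdx, h2.fderiv]
    have hL1 : L ((1, 0, 0) : ℝ × ℝ × ℝ) = ((1, 0, c) : ℝ × ℝ × ℝ) := by
      rw [hLS]; simp [hS]
    simp only [ContinuousLinearMap.coe_comp', Function.comp_apply, hL1, hv, map_add,
      ContinuousLinearMap.map_smul, smul_eq_mul]
    rfl
  -- transfer LHS via shear
  have hLHS : ∫ q : ℝ × ℝ × ℝ, Real.exp (-2 * γ * q.1) * ξ q ^ 2 =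
      ∫ q : ℝ × ℝ × ℝ, Real.exp (-2 * γ * q.1) * η q ^ 2 :=
    (shear_integral c (fun q => Real.exp (-2 * γ * q.1) * ξ q ^ 2)).symm
  -- main estimate for η
  have hmain := threeD_x γ hγ η hηC1 hηs
  -- rewrite pdx η and use shear on the RHS
  have hRHS : ∫ q : ℝ × ℝ × ℝ, Real.exp (-2 * γ * q.1) * pdx η q ^ 2 =
      ∫ q : ℝ × ℝ × ℝ, Real.exp (-2 * γ * q.1) * (pdx ξ q + c * pdz ξ q) ^ 2 := by
    rw [show (fun q : ℝ × ℝ × ℝ => Real.exp (-2 * γ * q.1) * pdx η q ^ 2) =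
        fun q : ℝ × ℝ × ℝ => Real.exp (-2 * γ * q.1) * (pdx ξ (S q) + c * pdz ξ (S q)) ^ 2 from
      funext fun q => by rw [hpdxη]]
    exact shear_integral c (fun q => Real.exp (-2 * γ * q.1) * (pdx ξ q + c * pdz ξ q) ^ 2)
  have hB : ∫ q : ℝ × ℝ × ℝ, Real.exp (-2 * γ * q.1) * (a * pdx ξ q + b * pdz ξ q) ^ 2 =
      a ^ 2 * ∫ q : ℝ × ℝ × ℝ, Real.exp (-2 * γ * q.1) * (pdx ξ q + c * pdz ξ q) ^ 2 := by
    rw [← integral_const_mul]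
    congr 1
    funext q
    rw [← hac]
    ring
  have hkey : γ ^ 2 * ∫ q : ℝ × ℝ × ℝ, Real.exp (-2 * γ * q.1) * ξ q ^ 2 ≤
      ∫ q : ℝ × ℝ × ℝ, Real.exp (-2 * γ * q.1) * (pdx ξ q + c * pdz ξ q) ^ 2 := by
    rw [hLHS]
    exact hmain.trans_eq hRHS
  rw [hB]
  set C := ∫ q : ℝ × ℝ × ℝ, Real.exp (-2 * γ * q.1) * (pdx ξ q + c * pdz ξ q) ^ 2 with hCdef
  have heq : ((a * γ) ^ 2)⁻¹ * (a ^ 2 * C) = C / γ ^ 2 := by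
    field_simp
  rw [heq, le_div_iff₀ (by positivity)]
  linarith
end
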